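/- Let s be a positive integer. The alternating word (+-)^s (of length 2s) satisfies (+-)^s ≥ W for every word W over {+,-,*} of length at most s, and for every word W of length s+1 that contains at least one * except those of the form W = (-)^r * (+)^l with r + l = s. -/

import Mathlib

inductive Symb : Type
  | plus | minus | star
deriving DecidableEq


/-- the dual of a symbol: `+` ↦ `-`, `-` ↦ `+`, `*` ↦ `*` -/
def dualSym : Symb → Symb
  | Symb.plus => Symb.minus
  | Symb.minus => Symb.plus
  | Symb.star => Symb.star

/-- the dual (involution) of a word: reverse and dualize each symbol -/
def dualWord (W : List Symb) : List Symb := (W.map dualSym).reverse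

/-- the arc relation of the reflexive path `P(W)` on vertices `{0,…,|W|}` -/
def pathArc (W : List Symb) (i j : ℕ) : Prop :=
  i ≤ W.length ∧ j ≤ W.length ∧
    (i = j ∨ (j = i + 1 ∧ (W[i]? = some Symb.plus ∨ W[i]? = some Symb.star))
           ∨ (i = j + 1 ∧ (W[j]? = some Symb.minus ∨ W[j]? = some Symb.star)))

/-- `f` is an end-point preserving homomorphism from the path `P(V)` onto the path `P(U)` -/
def EPHom (V U : List Symb) (f : ℕ → ℕ) : Prop :=
  f 0 = 0 ∧ f V.length = U.length ∧
  (∀ i j, pathArc V i j → pathArc U (f i) (f j)) ∧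
  (∀ m, m ≤ U.length → ∃ i, i ≤ V.length ∧ f i = m)

/-- the order on words: `U ≤ V` iff there is an end-point preserving
homomorphism from `P(V)` onto `P(U)` -/
def wle (U V : List Symb) : Prop := ∃ f, EPHom V U f

/-- cost of crossing symbol `c` starting at time `t` -/
def cost (c : Symb) (t : ℕ) : ℕ :=
  match c with
  | Symb.star => 1
  | Symb.plus => if t % 2 = 0 then 1 else 2
  | Symb.minus => if t % 2 = 0 then 2 else 1

lemma cost_pos (c : Symb) (t : ℕ) : 1 ≤ cost c t := by
  cases c <;> simp [cost] <;> split <;> omega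

lemma cost_le (c : Symb) (t : ℕ) : cost c t ≤ 2 := by
  cases c <;> simp [cost] <;> split <;> omega

/-- greedy arrival time at vertex `a` -/
def arr (W : List Symb) : ℕ → ℕ
  | 0 => 0
  | a+1 => arr W a + (match W[a]? with | some c => cost c (arr W a) | none => 1)

lemma arr_succ_lt (W : List Symb) (a : ℕ) (h : a < W.length) :
    arr W (a+1) = arr W a + cost W[a] (arr W a) := by
  simp [arr, List.getElem?_eq_getElem h]

lemma arr_succ_ge (W : List Symb) (a b : ℕ) :
    arr W a + 1 ≤ arr W (a+1) ∧ arr W (a+1) ≤ arr W a + 2 := by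
  show arr W a + 1 ≤ arr W a + _ ∧ _
  rcases h : W[a]? with _ | c <;> simp [arr, h]
  exact ⟨cost_pos c _, cost_le c _⟩

lemma arr_strictMono (W : List Symb) : StrictMono (arr W) := by
  apply strictMono_nat_of_lt_succ
  intro a
  have := (arr_succ_ge W a 0).1
  omega

lemma arr_le_two (W : List Symb) (a : ℕ) : arr W a ≤ 2 * a := by
  induction a with
  | zero => simp [arr]
  | succ a ih => have := (arr_succ_ge W a 0).2; omega

noncomputable def walk (W : List Symb) (t : ℕ) : ℕ :=
  Nat.findGreatest (fun a => arr W a ≤ t) W.length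

lemma walk_le (W : List Symb) (t : ℕ) : walk W t ≤ W.length :=
  Nat.findGreatest_le _

lemma arr_walk_le (W : List Symb) (t : ℕ) : arr W (walk W t) ≤ t :=
  Nat.findGreatest_spec (P := fun a => arr W a ≤ t) (Nat.zero_le _) (by simp [arr])

lemma walk_gt (W : List Symb) (t k : ℕ) (hk : walk W t < k) (hk2 : k ≤ W.length) :
    ¬ arr W k ≤ t := by
  unfold walk at hk
  exact Nat.findGreatest_is_greatest (P := fun a => arr W a ≤ t) hk hk2

lemma walk_arr (W : List Symb) (a : ℕ) (h : a ≤ W.length) : walk W (arr W a) = a := by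
  have h1 : a ≤ walk W (arr W a) := Nat.le_findGreatest h le_rfl
  have h2 := arr_walk_le W (arr W a)
  have := (arr_strictMono W).le_iff_le.mp h2
  omega

lemma walk_zero (W : List Symb) : walk W 0 = 0 := by
  have := walk_arr W 0 (Nat.zero_le _)
  simpa [arr] using this

lemma walk_mono (W : List Symb) : Monotone (walk W) := by
  intro t u htu
  exact Nat.le_findGreatest (walk_le W t) (le_trans (arr_walk_le W t) htu)

lemma walk_step (W : List Symb) (t : ℕ) :
    walk W (t+1) = walk W t ∨
    (walk W (t+1) = walk W t + 1 ∧ arr W (walk W t + 1) = t + 1) := by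
  have hm := walk_mono W (show t ≤ t + 1 by omega)
  rcases eq_or_lt_of_le hm with h | h
  · exact Or.inl h.symm
  · right
    -- walk W (t+1) ≥ walk W t + 1
    have hle : walk W (t+1) ≤ W.length := walk_le W (t+1)
    have ha1 : arr W (walk W t + 1) ≤ arr W (walk W (t+1)) :=
      (arr_strictMono W).monotone h
    have ha2 : arr W (walk W (t+1)) ≤ t + 1 := arr_walk_le W (t+1)
    have hng : ¬ arr W (walk W t + 1) ≤ t :=
      walk_gt W t _ (by omega) (by omega)
    have heq : arr W (walk W t + 1) = t + 1 := by omega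
    constructor
    · have := walk_arr W (walk W t + 1) (by omega)
      rw [heq] at this
      omega
    · exact heq

/-- the crossed symbol is compatible with the parity of the crossing step -/
lemma walk_cross (W : List Symb) (t : ℕ)
    (h : walk W (t+1) = walk W t + 1) :
    ∃ c, W[walk W t]? = some c ∧
      (t % 2 = 0 → c ≠ Symb.minus) ∧ (t % 2 = 1 → c ≠ Symb.plus) := by
  rcases walk_step W t with h' | ⟨_, heq⟩
  · omega
  set a := walk W t with ha
  have haln : a + 1 ≤ W.length := h ▸ walk_le W (t+1)
  have hlt : a < W.length := haln
  refine ⟨W[a], List.getElem?_eq_getElem hlt, ?_, ?_⟩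
  · intro ht hc
    rw [arr_succ_lt W a hlt, hc] at heq
    have h2 := arr_walk_le W t
    rw [← ha] at h2
    simp [cost] at heq
    split at heq <;> omega
  · intro ht hc
    rw [arr_succ_lt W a hlt, hc] at heq
    have h2 := arr_walk_le W t
    rw [← ha] at h2
    simp [cost] at heq
    split at heq <;> omega

lemma walk_even_arc (W : List Symb) (t : ℕ) (ht : t % 2 = 0) :
    pathArc W (walk W t) (walk W (t+1)) := by
  refine ⟨walk_le W t, walk_le W (t+1), ?_⟩
  rcases walk_step W t with h | ⟨h, _⟩
  · exact Or.inl h.symm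
  · obtain ⟨c, hc, h0, _⟩ := walk_cross W t h
    right; left
    refine ⟨h, ?_⟩
    have := h0 ht
    cases c
    · exact Or.inl hc
    · exact absurd rfl this
    · exact Or.inr hc

lemma walk_odd_arc (W : List Symb) (t : ℕ) (ht : t % 2 = 1) :
    pathArc W (walk W (t+1)) (walk W t) := by
  refine ⟨walk_le W (t+1), walk_le W t, ?_⟩
  rcases walk_step W t with h | ⟨h, _⟩
  · exact Or.inl h
  · obtain ⟨c, hc, _, h1⟩ := walk_cross W t h
    right; right
    refine ⟨h, ?_⟩
    have := h1 ht
    cases c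
    · exact absurd rfl this
    · exact Or.inl hc
    · exact Or.inr hc

/-- the alternating word -/
def alt (s : ℕ) : List Symb := (List.replicate s [Symb.plus, Symb.minus]).flatten

lemma alt_succ (s : ℕ) : alt (s+1) = Symb.plus :: Symb.minus :: alt s := by
  simp [alt, List.replicate_succ]

lemma alt_len (s : ℕ) : (alt s).length = 2 * s := by
  induction s with
  | zero => rfl
  | succ s ih => rw [alt_succ]; simp [ih]; omega

lemma alt_get (s i : ℕ) (h : i < 2 * s) :
    (alt s)[i]? = some (if i % 2 = 0 then Symb.plus else Symb.minus) := by
  induction s generalizing i with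
  | zero => omega
  | succ s ih =>
    rw [alt_succ]
    match i with
    | 0 => simp
    | 1 => simp
    | (i+2) =>
      have h2 : (Symb.plus :: Symb.minus :: alt s)[i+2]? = (alt s)[i]? := by simp
      rw [h2, ih i (by omega)]
      have h3 : (i+2) % 2 = i % 2 := by omega
      rw [h3]

/-- The main construction: if the greedy walk finishes in time, we get a homomorphism. -/
lemma main_hom (W : List Symb) (s : ℕ) (h : arr W W.length ≤ 2 * s) :
    wle W (alt s) := by
  refine ⟨walk W, walk_zero W, ?_, ?_, ?_⟩
  · rw [alt_len]
    have h1 : W.length ≤ walk W (2*s) := Nat.le_findGreatest le_rfl h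
    have h2 := walk_le W (2*s)
    omega
  · rintro i j ⟨hi, hj, hij | ⟨hj1, hVi⟩ | ⟨hi1, hVj⟩⟩
    · subst hij
      exact ⟨walk_le W i, walk_le W i, Or.inl rfl⟩
    · -- j = i + 1, alt s has symbol + or * at i : must be +, so i even
      rw [alt_len] at hi hj
      have hilt : i < 2 * s := by omega
      rw [alt_get s i hilt] at hVi
      subst hj1
      rcases Nat.mod_two_eq_zero_or_one i with hie | hie
      · exact walk_even_arc W i hie
      · rw [if_neg (by omega)] at hVi
        rcases hVi with h' | h' <;> simp at h'
    · rw [alt_len] at hi hj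
      have hjlt : j < 2 * s := by omega
      rw [alt_get s j hjlt] at hVj
      subst hi1
      rcases Nat.mod_two_eq_zero_or_one j with hje | hje
      · rw [if_pos hje] at hVj
        rcases hVj with h' | h' <;> simp at h'
      · exact walk_odd_arc W j hje
  · intro m hm
    rw [alt_len]
    refine ⟨arr W m, ?_, walk_arr W m hm⟩
    calc arr W m ≤ arr W W.length := (arr_strictMono W).monotone hm
    _ ≤ 2 * s := h

/-- the key invariant for the greedy walk -/
lemma invariant (W : List Symb) (a : ℕ) (h : a ≤ W.length) :
    (arr W a + 2 ≤ 2 * a)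
    ∨ (arr W a = 2 * a ∧ ∀ b < a, W[b]? = some Symb.minus)
    ∨ (arr W a + 1 = 2 * a ∧ ∀ b < a, W[b]? ≠ some Symb.star)
    ∨ (arr W a + 1 = 2 * a ∧ ∃ r, r < a ∧ (∀ b < r, W[b]? = some Symb.minus) ∧
        W[r]? = some Symb.star ∧ ∀ b, r < b → b < a → W[b]? = some Symb.plus) := by
  induction a with
  | zero => right; left; exact ⟨rfl, fun b hb => absurd hb (Nat.not_lt_zero b)⟩
  | succ a ih =>
    have ha : a < W.length := h
    have harr := arr_succ_lt W a ha
    have hgc : W[a]? = some W[a] := List.getElem?_eq_getElem ha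
    rcases ih (le_of_lt ha) with h1 | ⟨h2, h2m⟩ | ⟨h3, h3s⟩ | ⟨h4, r, hr, hrm, hrs, hrp⟩
    · left
      have := cost_le W[a] (arr W a)
      omega
    · -- arr W a = 2*a (even), all previous symbols are minus
      have hpar : arr W a % 2 = 0 := by omega
      rcases hc : W[a] with _ | _ | _
      · -- plus : cost 1, go to case (iii)
        right; right; left
        constructor
        · rw [harr, hc]; simp [cost, hpar]; omega
        · intro b hb hbs
          rcases Nat.lt_or_ge b a with hba | hba
          · rw [h2m b hba] at hbs; simp at hbs
          · have hba' : b = a := by omega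
            rw [hba', hgc, hc] at hbs; simp at hbs
      · -- minus : cost 2, stay in case (ii)
        right; left
        constructor
        · rw [harr, hc]; simp [cost, hpar]; omega
        · intro b hb
          rcases Nat.lt_or_ge b a with hba | hba
          · exact h2m b hba
          · have hba' : b = a := by omega
            rw [hba', hgc, hc]
      · -- star : cost 1, go to case (iv)
        right; right; right
        constructor
        · rw [harr, hc]; simp [cost]; omega
        · exact ⟨a, Nat.lt_succ_self a, h2m, by rw [hgc, hc], fun b hb1 hb2 => by omega⟩
    · -- arr W a + 1 = 2*a (odd), no star so far
      have hpar : arr W a % 2 = 1 := by omega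
      rcases hc : W[a] with _ | _ | _
      · -- plus : cost 2, stay in (iii)
        right; right; left
        constructor
        · rw [harr, hc]; simp only [cost]; rw [if_neg (show ¬ arr W a % 2 = 0 by omega)]; omega
        · intro b hb hbs
          rcases Nat.lt_or_ge b a with hba | hba
          · exact h3s b hba hbs
          · have hba' : b = a := by omega
            rw [hba', hgc, hc] at hbs; simp at hbs
      · -- minus : cost 1, done, case (i)
        left
        rw [harr, hc]; simp only [cost]; rw [if_neg (show ¬ arr W a % 2 = 0 by omega)]; omega
      · -- star : cost 1, done, case (i)
        left
        rw [harr, hc]; simp [cost]; omega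
    · -- arr W a + 1 = 2*a (odd), prefix is minus^r * plus^...
      have hpar : arr W a % 2 = 1 := by omega
      rcases hc : W[a] with _ | _ | _
      · -- plus : cost 2, stay in (iv)
        right; right; right
        constructor
        · rw [harr, hc]; simp only [cost]; rw [if_neg (show ¬ arr W a % 2 = 0 by omega)]; omega
        · refine ⟨r, by omega, hrm, hrs, ?_⟩
          intro b hb1 hb2
          rcases Nat.lt_or_ge b a with hba | hba
          · exact hrp b hb1 hba
          · have hba' : b = a := by omega
            rw [hba', hgc, hc]
      · left
        rw [harr, hc]; simp only [cost]; rw [if_neg (show ¬ arr W a % 2 = 0 by omega)]; omega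
      · left
        rw [harr, hc]; simp [cost]; omega

lemma pat_get (r l i : ℕ) :
    (List.replicate r Symb.minus ++ Symb.star :: List.replicate l Symb.plus)[i]? =
      if i < r then some Symb.minus else if i = r then some Symb.star
      else if i < r + 1 + l then some Symb.plus else none := by
  by_cases h1 : i < r
  · rw [List.getElem?_append_left (by simpa using h1), List.getElem?_replicate, if_pos h1,
      if_pos h1]
  · rw [List.getElem?_append_right (by simp; omega), if_neg h1]
    simp only [List.length_replicate]
    by_cases h2 : i = r
    · rw [if_pos h2, h2]
      simp
    · rw [if_neg h2]
      have h3 : i - r = (i - r - 1) + 1 := by omega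
      rw [h3, List.getElem?_cons_succ, List.getElem?_replicate]
      by_cases h4 : i < r + 1 + l
      · rw [if_pos h4, if_pos (by omega)]
      · rw [if_neg h4, if_neg (by omega)]

lemma arr_bound (W : List Symb) (s : ℕ) (hlen : W.length = s + 1)
    (hstar : Symb.star ∈ W)
    (hexc : ∀ r l : ℕ, r + l = s →
      W ≠ List.replicate r Symb.minus ++ Symb.star :: List.replicate l Symb.plus) :
    arr W W.length ≤ 2 * s := by
  obtain ⟨b, hb, hbs⟩ := List.mem_iff_getElem.mp hstar
  have hbs' : W[b]? = some Symb.star := by rw [List.getElem?_eq_getElem hb, hbs]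
  rcases invariant W W.length le_rfl with h1 | ⟨h2, h2m⟩ | ⟨h3, h3s⟩ | ⟨h4, r, hr, hrm, hrs, hrp⟩
  · omega
  · rw [h2m b hb] at hbs'; simp at hbs'
  · exact absurd hbs' (h3s b hb)
  · exfalso
    apply hexc r (s - r) (by omega)
    apply List.ext_getElem?
    intro i
    rw [pat_get]
    by_cases hc1 : i < r
    · rw [if_pos hc1]; exact hrm i hc1
    · rw [if_neg hc1]
      by_cases hc2 : i = r
      · rw [if_pos hc2, hc2]; exact hrs
      · rw [if_neg hc2]
        by_cases hc3 : i < r + 1 + (s - r)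
        · rw [if_pos hc3]; exact hrp i (by omega) (by omega)
        · rw [if_neg hc3]
          exact List.getElem?_eq_none (by omega)

/-- `(+-)^s ≥ W` for every word `W` of length at most `s`, and for every `W` of
length `s+1` containing at least one `*` except those of the form `(-)^r * (+)^l`. -/
theorem stmt_14 (s : ℕ) (hs : 1 ≤ s) :
    (∀ W : List Symb, W.length ≤ s →
      wle W ((List.replicate s [Symb.plus, Symb.minus]).flatten)) ∧
    (∀ W : List Symb, W.length = s + 1 → Symb.star ∈ W →
      (∀ r l : ℕ, r + l = s →
        W ≠ List.replicate r Symb.minus ++ Symb.star :: List.replicate l Symb.plus) →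
      wle W ((List.replicate s [Symb.plus, Symb.minus]).flatten)) := by
  constructor
  · intro W hW
    exact main_hom W s (le_trans (arr_le_two W W.length) (by omega))
  · intro W hlen hstar hexc
    exact main_hom W s (arr_bound W s hlen hstar hexc)
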